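/- Existence of a water-level: suppose for each s ∈ S, p_s(λ) = min(max(w_s/(λ ln 2 + t_s) − J_s/g_s, 0), P_s^mask) with all t_s > 0, and let F(λ) = Σ_s p_s(λ) for λ ≥ 0. If F(0) ≥ P^max and P^max ≥ 0, then there exists λ* ≥ 0 with F(λ*) = P^max; in particular F is continuous, nonincreasing, and tends to 0 as λ → ∞. -/

import Mathlib

open Finset Filter Set

/-- Existence of a water-level. With
`p_s(λ) = clamp(w_s/(λ ln 2 + t_s) − J_s/g_s, 0, P_s^mask)` (all `t_s > 0`) and
`F(λ) = ∑_s p_s(λ)`, if `F(0) ≥ Pmax ≥ 0` then there exists `λ* ≥ 0` with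
`F(λ*) = Pmax`; moreover `F` is continuous and nonincreasing on `[0,∞)` and
tends to `0` as `λ → ∞`. -/
theorem waterlevel_exists
    {S : Type} [Fintype S]
    (w t J g Pmask : S → ℝ)
    (hw : ∀ s, 0 < w s) (ht : ∀ s, 0 < t s) (hJ : ∀ s, 0 < J s)
    (hg : ∀ s, 0 < g s) (hP : ∀ s, 0 ≤ Pmask s)
    (PMAX : ℝ) (hPMAX : 0 ≤ PMAX)
    (F : ℝ → ℝ)
    (hF : ∀ l, F l = ∑ s : S,
      min (max (w s / (l * Real.log 2 + t s) - J s / g s) 0) (Pmask s))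
    (hF0 : PMAX ≤ F 0) :
    (∃ lstar : ℝ, 0 ≤ lstar ∧ F lstar = PMAX) ∧
    ContinuousOn F (Set.Ici 0) ∧
    AntitoneOn F (Set.Ici 0) ∧
    Tendsto F atTop (nhds 0) := by
  have hlog : (0:ℝ) < Real.log 2 := Real.log_pos (by norm_num)
  have hden : ∀ (s : S) (l : ℝ), 0 ≤ l → 0 < l * Real.log 2 + t s := fun s l hl =>
    add_pos_of_nonneg_of_pos (mul_nonneg hl hlog.le) (ht s)
  -- continuity
  have hcont : ContinuousOn F (Set.Ici 0) := by
    have : ContinuousOn (fun l => ∑ s : S,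
        min (max (w s / (l * Real.log 2 + t s) - J s / g s) 0) (Pmask s)) (Set.Ici 0) := by
      apply continuousOn_finset_sum
      intro s _
      have h1 : ContinuousOn (fun l : ℝ => w s / (l * Real.log 2 + t s)) (Set.Ici 0) :=
        continuousOn_const.div (((continuous_id.mul continuous_const).add continuous_const).continuousOn) (fun l hl => (hden s l hl).ne')
      exact ((h1.sub continuousOn_const).sup continuousOn_const).inf continuousOn_const
    exact this.congr (fun l _ => hF l)
  -- antitone
  have hanti : AntitoneOn F (Set.Ici 0) := by
    intro a ha b hb hab
    rw [hF a, hF b]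
    apply Finset.sum_le_sum
    intro s _
    apply min_le_min _ le_rfl
    apply max_le_max _ le_rfl
    apply sub_le_sub_right
    apply div_le_div_of_nonneg_left (hw s).le (hden s a ha)
    exact add_le_add (mul_le_mul_of_nonneg_right hab hlog.le) le_rfl
  -- eventually zero
  have hev : ∀ᶠ l in atTop, F l = 0 := by
    have h1 : ∀ s : S, ∀ᶠ l : ℝ in atTop, w s / (l * Real.log 2 + t s) < J s / g s := by
      intro s
      have hg2 : Tendsto (fun l : ℝ => l * Real.log 2 + t s) atTop atTop :=
        tendsto_atTop_add_const_right _ _ (tendsto_id.atTop_mul_const hlog)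
      have h0 : Tendsto (fun l : ℝ => w s / (l * Real.log 2 + t s)) atTop (nhds 0) :=
        tendsto_const_nhds.div_atTop hg2
      exact h0.eventually_lt_const (div_pos (hJ s) (hg s))
    have h2 : ∀ᶠ l : ℝ in atTop, ∀ s : S, w s / (l * Real.log 2 + t s) < J s / g s :=
      eventually_all.2 h1
    filter_upwards [h2] with l hl
    rw [hF l]
    apply Finset.sum_eq_zero
    intro s _
    have : max (w s / (l * Real.log 2 + t s) - J s / g s) 0 = 0 :=
      max_eq_right (sub_nonpos.2 (hl s).le)
    rw [this, min_eq_left (hP s)]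
  -- get L with F L = 0 and L ≥ 0
  obtain ⟨L, hL⟩ := (hev.and (eventually_ge_atTop (0:ℝ))).exists
  refine ⟨?_, hcont, hanti, ?_⟩
  · -- IVT on [0, L]
    have hsub : Set.Icc (0:ℝ) L ⊆ Set.Ici 0 := Set.Icc_subset_Ici_self
    have := intermediate_value_Icc' hL.2 (hcont.mono hsub)
    have hmem : PMAX ∈ Set.Icc (F L) (F 0) := ⟨hL.1 ▸ hPMAX, hF0⟩
    obtain ⟨x, hx, hfx⟩ := this hmem
    exact ⟨x, hx.1, hfx⟩
  · exact Tendsto.congr' (hev.mono fun l h => h.symm) tendsto_const_nhds
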